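/- Terminality (Theorem 3.2, coalgebra part): let E be an effect signature, X a type, A a partial order with least element ⊥ in which every directed subset has a least upper bound, and let δ : A → Option ((Σ m : E, (ar m → A)) ⊕ X) satisfy δ ⊥ = none and be Scott-continuous with respect to the order on the codomain (none ≤ d for all d; some (inl ⟨m, g⟩) ≤ some (inl ⟨m', g'⟩) iff m = m' and g n ≤ g' n for all n; some (inr x) ≤ some (inr x') iff x = x'), i.e. monotone and preserving least upper bounds of directed subsets. Then there exists a unique function ψ : A → S̄_E(X) such that: ψ ⊥ = ∅; ψ is monotone and preserves least upper bounds of directed subsets; and for every a : A, if δ a = none then ψ a = ∅, if δ a = some (inr x) then ψ a = {ret x}, and if δ a = some (inl ⟨m, g⟩) then ψ a = {op m} ∪ {m·n·s | n : ar m, s ∈ ψ (g n)}. -/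

import Mathlib

universe u v w

/-- Coplays over an effect signature `(E, ar)` with results in `X`. -/
inductive Coplay (E : Type u) (ar : E → Type v) (X : Type w) : Type (max u v w)
  | ret : X → Coplay E ar X
  | op : E → Coplay E ar X
  | cons : (m : E) → ar m → Coplay E ar X → Coplay E ar X

/-- The prefix relation `⊑` on coplays. -/
inductive Coplay.Prefix {E : Type u} {ar : E → Type v} {X : Type w} :
    Coplay E ar X → Coplay E ar X → Prop
  | ret (x : X) : Coplay.Prefix (.ret x) (.ret x)
  | op (m : E) : Coplay.Prefix (.op m) (.op m)
  | op_cons (m : E) (n : ar m) (t : Coplay E ar X) :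
      Coplay.Prefix (.op m) (.cons m n t)
  | cons (m : E) (n : ar m) {s t : Coplay E ar X} :
      Coplay.Prefix s t → Coplay.Prefix (.cons m n s) (.cons m n t)

/-- The coherence relation `☡` on coplays. -/
inductive Coplay.Coh {E : Type u} {ar : E → Type v} {X : Type w} :
    Coplay E ar X → Coplay E ar X → Prop
  | ret (x : X) : Coplay.Coh (.ret x) (.ret x)
  | op (m : E) : Coplay.Coh (.op m) (.op m)
  | op_cons (m : E) (n : ar m) (s : Coplay E ar X) :
      Coplay.Coh (.op m) (.cons m n s)
  | cons (m : E) (n₁ n₂ : ar m) (s₁ s₂ : Coplay E ar X) :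
      (n₁ = n₂ → Coplay.Coh s₁ s₂) → Coplay.Coh (.cons m n₁ s₁) (.cons m n₂ s₂)

/-- A costrategy: a set of coplays, downward closed under the prefix relation
and pairwise coherent. -/
def IsCostrategy {E : Type u} {ar : E → Type v} {X : Type w}
    (σ : Set (Coplay E ar X)) : Prop :=
  (∀ s t : Coplay E ar X, Coplay.Prefix s t → t ∈ σ → s ∈ σ) ∧
  (∀ s ∈ σ, ∀ t ∈ σ, Coplay.Coh s t ∨ Coplay.Coh t s)

/-- The codomain `Option ((Σ m : E, (ar m → A)) ⊕ X)` of a coalgebra structure map. -/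
def CoalgObj (E : Type u) (ar : E → Type v) (X : Type w) (A : Type u_1) :=
  Option ((Σ m : E, (ar m → A)) ⊕ X)

/-- The order on `Option ((Σ m : E, (ar m → A)) ⊕ X)`. -/
inductive CoalgLE {E : Type u} {ar : E → Type v} {X : Type w} {A : Type u_1} [LE A] :
    CoalgObj E ar X A → CoalgObj E ar X A → Prop
  | bot (d : CoalgObj E ar X A) : CoalgLE none d
  | inl (m : E) (g g' : ar m → A) :
      (∀ n, g n ≤ g' n) → CoalgLE (some (Sum.inl ⟨m, g⟩)) (some (Sum.inl ⟨m, g'⟩))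
  | inr (x : X) : CoalgLE (some (Sum.inr x)) (some (Sum.inr x))

set_option linter.unusedSectionVars false

namespace CostratTerminal

variable {E : Type u} {ar : E → Type v} {X : Type w} {A : Type u_1}

/-- Membership predicate defining the terminal map. -/
def phi (δ : A → CoalgObj E ar X A) : Coplay E ar X → A → Prop
  | .ret x, a => δ a = some (Sum.inr x)
  | .op m, a => ∃ g, δ a = some (Sum.inl ⟨m, g⟩)
  | .cons m n u, a => ∃ g, δ a = some (Sum.inl ⟨m, g⟩) ∧ phi δ u (g n)

section LE
variable [LE A] {δ : A → CoalgObj E ar X A}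

lemma le_none_inv {d : CoalgObj E ar X A} (h : CoalgLE d none) : d = none := by
  cases h; rfl

lemma inr_le_inv {x : X} {d : CoalgObj E ar X A}
    (h : CoalgLE (some (Sum.inr x)) d) : d = some (Sum.inr x) := by
  cases h; rfl

lemma inl_le_inv {m : E} {g : ar m → A} {d : CoalgObj E ar X A}
    (h : CoalgLE (some (Sum.inl ⟨m, g⟩)) d) :
    ∃ g', d = some (Sum.inl ⟨m, g'⟩) ∧ ∀ n, g n ≤ g' n := by
  cases h with
  | inl _ _ g' hg => exact ⟨g', rfl, hg⟩

lemma le_inr_inv {x : X} {d : CoalgObj E ar X A}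
    (h : CoalgLE d (some (Sum.inr x))) : d = none ∨ d = some (Sum.inr x) := by
  cases h with
  | bot => exact Or.inl rfl
  | inr => exact Or.inr rfl

lemma le_inl_inv {m : E} {g : ar m → A} {d : CoalgObj E ar X A}
    (h : CoalgLE d (some (Sum.inl ⟨m, g⟩))) :
    d = none ∨ ∃ ga, d = some (Sum.inl ⟨m, ga⟩) ∧ ∀ n, ga n ≤ g n := by
  cases h with
  | bot => exact Or.inl rfl
  | inl _ ga _ hg => exact Or.inr ⟨ga, rfl, hg⟩

lemma inl_eq_inl {m : E} {g g' : ar m → A}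
    (h : (some (Sum.inl ⟨m, g⟩) : CoalgObj E ar X A) = some (Sum.inl ⟨m, g'⟩)) :
    g = g' := by
  have h' : (Sum.inl ⟨m, g⟩ : (Σ m : E, (ar m → A)) ⊕ X) = Sum.inl ⟨m, g'⟩ :=
    Option.some.inj h
  simpa using h'


lemma inl_inj {m m' : E} {g : ar m → A} {g' : ar m' → A}
    (h : (some (Sum.inl ⟨m, g⟩) : CoalgObj E ar X A) = some (Sum.inl ⟨m', g'⟩)) :
    m = m' := by
  have h' : (Sum.inl ⟨m, g⟩ : (Σ m : E, (ar m → A)) ⊕ X) = Sum.inl ⟨m', g'⟩ :=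
    Option.some.inj h
  have := Sum.inl.inj h'
  exact (Sigma.mk.inj_iff.mp this).1

lemma phi_ne_none {s : Coplay E ar X} {a : A} (h : phi δ s a) : δ a ≠ none := by
  cases s with
  | ret x => intro hc; have h2 : δ a = some (Sum.inr x) := h; rw [hc] at h2; exact nomatch h2
  | op m => obtain ⟨g, hg⟩ := h; intro hc; rw [hc] at hg; exact nomatch hg
  | cons m n u => obtain ⟨g, hg, _⟩ := h; intro hc; rw [hc] at hg; exact nomatch hg

end LE

section Pre
variable [Preorder A] {δ : A → CoalgObj E ar X A}

lemma phi_mono (hmono : ∀ a b : A, a ≤ b → CoalgLE (δ a) (δ b)) :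
    ∀ (s : Coplay E ar X) (a b : A), a ≤ b → phi δ s a → phi δ s b := by
  intro s
  induction s with
  | ret x =>
    intro a b hab h
    have := hmono a b hab
    rw [show δ a = some (Sum.inr x) from h] at this
    exact inr_le_inv this
  | op m =>
    intro a b hab h
    obtain ⟨g, hg⟩ := h
    have := hmono a b hab
    rw [hg] at this
    obtain ⟨g', hg', _⟩ := inl_le_inv this
    exact ⟨g', hg'⟩
  | cons m n u ih =>
    intro a b hab h
    obtain ⟨g, hg, hu⟩ := h
    have := hmono a b hab
    rw [hg] at this
    obtain ⟨g', hg', hle⟩ := inl_le_inv this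
    exact ⟨g', hg', ih (g n) (g' n) (hle n) hu⟩

lemma phi_prefix {s t : Coplay E ar X} (hpre : Coplay.Prefix s t) :
    ∀ a : A, phi δ t a → phi δ s a := by
  induction hpre with
  | ret x => exact fun a h => h
  | op m => exact fun a h => h
  | op_cons m n t => exact fun a h => ⟨h.choose, h.choose_spec.1⟩
  | cons m n _ ih =>
    intro a h
    obtain ⟨g, hg, hu⟩ := h
    exact ⟨g, hg, ih (g n) hu⟩

lemma phi_coh :
    ∀ (s t : Coplay E ar X) (a : A), phi δ s a → phi δ t a →
      Coplay.Coh s t ∨ Coplay.Coh t s := by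
  intro s
  induction s with
  | ret x =>
    intro t a hs ht
    cases t with
    | ret y =>
      have : x = y := Sum.inr.inj (Option.some.inj (hs.symm.trans ht))
      subst this
      exact Or.inl (Coplay.Coh.ret x)
    | op m =>
      obtain ⟨g, hg⟩ := ht
      exact nomatch (hs.symm.trans hg)
    | cons m n u =>
      obtain ⟨g, hg, _⟩ := ht
      exact nomatch (hs.symm.trans hg)
  | op m =>
    intro t a hs ht
    obtain ⟨g, hg⟩ := hs
    cases t with
    | ret y => exact nomatch (hg.symm.trans ht)
    | op m' =>
      obtain ⟨g', hg'⟩ := ht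
      have hm : m = m' := inl_inj (hg.symm.trans hg')
      subst hm
      exact Or.inl (Coplay.Coh.op m)
    | cons m' n u =>
      obtain ⟨g', hg', _⟩ := ht
      have hm : m = m' := inl_inj (hg.symm.trans hg')
      subst hm
      exact Or.inl (Coplay.Coh.op_cons m n u)
  | cons m n u ih =>
    intro t a hs ht
    obtain ⟨g, hg, hu⟩ := hs
    cases t with
    | ret y => exact nomatch (hg.symm.trans ht)
    | op m' =>
      obtain ⟨g', hg'⟩ := ht
      have hm : m = m' := inl_inj (hg.symm.trans hg')
      subst hm
      exact Or.inr (Coplay.Coh.op_cons m n u)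
    | cons m' n' u' =>
      obtain ⟨g', hg', hu'⟩ := ht
      have hm : m = m' := inl_inj (hg.symm.trans hg')
      subst hm
      have hgg : g = g' := inl_eq_inl (hg.symm.trans hg')
      subst hgg
      by_cases hn : n = n'
      · subst hn
        rcases ih u' (g n) hu hu' with h | h
        · exact Or.inl (Coplay.Coh.cons m n n u u' (fun _ => h))
        · exact Or.inr (Coplay.Coh.cons m n n u' u (fun _ => h))
      · exact Or.inl (Coplay.Coh.cons m n n' u u' (fun h => absurd h hn))

end Pre

section PO
variable [PartialOrder A] {δ : A → CoalgObj E ar X A}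

lemma exists_ne_none
    (hcont : ∀ S : Set A, S.Nonempty → DirectedOn (· ≤ ·) S → ∀ l : A, IsLUB S l →
      (∀ a ∈ S, CoalgLE (δ a) (δ l)) ∧
      (∀ d : CoalgObj E ar X A, (∀ a ∈ S, CoalgLE (δ a) d) → CoalgLE (δ l) d))
    {S : Set A} {l : A} (hne : S.Nonempty) (hdir : DirectedOn (· ≤ ·) S)
    (hlub : IsLUB S l) (hl : δ l ≠ (none : CoalgObj E ar X A)) :
    ∃ a ∈ S, δ a ≠ (none : CoalgObj E ar X A) := by
  by_contra hc
  refine hl (le_none_inv ((hcont S hne hdir l hlub).2 (none : CoalgObj E ar X A) ?_))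
  intro a ha
  have hn : δ a = (none : CoalgObj E ar X A) := by
    by_contra hx
    exact hc ⟨a, ha, hx⟩
  rw [hn]
  exact CoalgLE.bot _

lemma phi_approx
    (hA : ∀ S : Set A, S.Nonempty → DirectedOn (· ≤ ·) S → ∃ l : A, IsLUB S l)
    (hmono : ∀ a b : A, a ≤ b → CoalgLE (δ a) (δ b))
    (hcont : ∀ S : Set A, S.Nonempty → DirectedOn (· ≤ ·) S → ∀ l : A, IsLUB S l →
      (∀ a ∈ S, CoalgLE (δ a) (δ l)) ∧
      (∀ d : CoalgObj E ar X A, (∀ a ∈ S, CoalgLE (δ a) d) → CoalgLE (δ l) d)) :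
    ∀ (s : Coplay E ar X) (S : Set A) (l : A), S.Nonempty → DirectedOn (· ≤ ·) S →
      IsLUB S l → phi δ s l → ∃ a ∈ S, phi δ s a := by
  intro s
  induction s with
  | ret x =>
    intro S l hne hdir hlub h
    have h' : δ l = some (Sum.inr x) := h
    obtain ⟨a, haS, hann⟩ := exists_ne_none hcont hne hdir hlub (by rw [h']; intro hc; cases hc)
    refine ⟨a, haS, ?_⟩
    have hle := hmono a l (hlub.1 haS)
    rw [h'] at hle
    rcases le_inr_inv hle with hn | hs
    · exact absurd hn hann
    · exact hs
  | op m =>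
    intro S l hne hdir hlub h
    obtain ⟨g, hg⟩ := h
    obtain ⟨a, haS, hann⟩ := exists_ne_none hcont hne hdir hlub (by rw [hg]; intro hc; cases hc)
    refine ⟨a, haS, ?_⟩
    have hle := hmono a l (hlub.1 haS)
    rw [hg] at hle
    rcases le_inl_inv hle with hn | ⟨ga, hga, _⟩
    · exact absurd hn hann
    · exact ⟨ga, hga⟩
  | cons m n u ih =>
    intro S l hne hdir hlub h
    obtain ⟨g, hg, hu⟩ := h
    -- the approximating sets
    set T : ar m → Set A :=
      fun k => {b | ∃ a ∈ S, ∃ ga, δ a = some (Sum.inl ⟨m, ga⟩) ∧ b = ga k} with hT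
    -- some element of S maps to an inl
    obtain ⟨a₀, ha₀S, ha₀nn⟩ := exists_ne_none hcont hne hdir hlub (by rw [hg]; intro hc; cases hc)
    have hle₀ := hmono a₀ l (hlub.1 ha₀S)
    rw [hg] at hle₀
    obtain ⟨g₀, hg₀, -⟩ : ∃ ga, δ a₀ = some (Sum.inl ⟨m, ga⟩) ∧ ∀ k, ga k ≤ g k := by
      rcases le_inl_inv hle₀ with hn | hx
      · exact absurd hn ha₀nn
      · exact hx
    have hTne : ∀ k, (T k).Nonempty := fun k => ⟨g₀ k, a₀, ha₀S, g₀, hg₀, rfl⟩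
    have hTdir : ∀ k, DirectedOn (· ≤ ·) (T k) := by
      intro k b₁ hb₁ b₂ hb₂
      obtain ⟨a₁, ha₁S, g₁, hg₁, rfl⟩ := hb₁
      obtain ⟨a₂, ha₂S, g₂, hg₂, rfl⟩ := hb₂
      obtain ⟨c, hcS, hc₁, hc₂⟩ := hdir a₁ ha₁S a₂ ha₂S
      have h₁ := hmono a₁ c hc₁
      rw [hg₁] at h₁
      obtain ⟨gc, hgc, hgc₁⟩ := inl_le_inv h₁
      have h₂ := hmono a₂ c hc₂
      rw [hg₂, hgc] at h₂
      obtain ⟨gc', hgc', hgc₂⟩ := inl_le_inv h₂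
      have : gc = gc' := inl_eq_inl hgc'
      subst this
      exact ⟨gc k, ⟨c, hcS, gc, hgc, rfl⟩, hgc₁ k, hgc₂ k⟩
    choose lb hlb using fun k => hA (T k) (hTne k) (hTdir k)
    -- the candidate upper bound
    have hub : ∀ a ∈ S, CoalgLE (δ a) (some (Sum.inl ⟨m, lb⟩)) := by
      intro a haS
      have hle := hmono a l (hlub.1 haS)
      rw [hg] at hle
      rcases le_inl_inv hle with hn | ⟨ga, hga, -⟩
      · rw [hn]; exact CoalgLE.bot _
      · rw [hga]
        exact CoalgLE.inl m ga lb (fun k => (hlb k).1 ⟨a, haS, ga, hga, rfl⟩)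
    have hll := (hcont S hne hdir l hlub).2 _ hub
    rw [hg] at hll
    have hup : ∀ k, g k ≤ lb k := by
      obtain ⟨g', hg', hgle⟩ := inl_le_inv hll
      have : g' = lb := inl_eq_inl hg'.symm
      subst this
      exact hgle
    have hgub : ∀ k, (g k) ∈ upperBounds (T k) := by
      intro k b hb
      obtain ⟨a, haS, ga, hga, rfl⟩ := hb
      have hle := hmono a l (hlub.1 haS)
      rw [hga, hg] at hle
      obtain ⟨g'', hg'', hle'⟩ := inl_le_inv hle
      have : g = g'' := inl_eq_inl hg''
      subst this
      exact hle' k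
    have hglub : IsLUB (T n) (g n) :=
      ⟨hgub n, fun b hb => le_trans (hup n) ((hlb n).2 hb)⟩
    obtain ⟨b, hbT, hphib⟩ := ih (T n) (g n) (hTne n) (hTdir n) hglub hu
    obtain ⟨a, haS, ga, hga, rfl⟩ := hbT
    exact ⟨a, haS, ga, hga, hphib⟩

end PO


end CostratTerminal

open CostratTerminal in
/-- Theorem 3.2, coalgebra part: terminality of `S̄_E(X)`. -/
theorem costrategies_terminal_coalgebra (E : Type u) (ar : E → Type v) (X : Type w)
    (A : Type*) [PartialOrder A] [OrderBot A]
    (hA : ∀ S : Set A, S.Nonempty → DirectedOn (· ≤ ·) S → ∃ l : A, IsLUB S l)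
    (δ : A → CoalgObj E ar X A)
    (hbot : δ ⊥ = none)
    (hmono : ∀ a b : A, a ≤ b → CoalgLE (δ a) (δ b))
    (hcont : ∀ S : Set A, S.Nonempty → DirectedOn (· ≤ ·) S → ∀ l : A, IsLUB S l →
      (∀ a ∈ S, CoalgLE (δ a) (δ l)) ∧
      (∀ d : CoalgObj E ar X A, (∀ a ∈ S, CoalgLE (δ a) d) → CoalgLE (δ l) d)) :
    ∃! ψ : A → {σ : Set (Coplay E ar X) // IsCostrategy σ},
      ((ψ ⊥).1 = ∅) ∧
      (∀ a b : A, a ≤ b → (ψ a).1 ⊆ (ψ b).1) ∧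
      (∀ S : Set A, S.Nonempty → DirectedOn (· ≤ ·) S → ∀ l : A, IsLUB S l →
        IsLUB (ψ '' S) (ψ l)) ∧
      (∀ a : A, δ a = none → (ψ a).1 = ∅) ∧
      (∀ (a : A) (x : X), δ a = some (Sum.inr x) → (ψ a).1 = {Coplay.ret x}) ∧
      (∀ (a : A) (m : E) (g : ar m → A), δ a = some (Sum.inl ⟨m, g⟩) →
        (ψ a).1 = {Coplay.op m} ∪
          {s | ∃ (n : ar m) (u : Coplay E ar X), u ∈ (ψ (g n)).1 ∧ s = Coplay.cons m n u}) := by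
  classical
  refine ⟨fun a => ⟨{s | phi δ s a},
      fun s t hpre ht => phi_prefix hpre a ht,
      fun s hs t ht => phi_coh s t a hs ht⟩, ⟨?_, ?_, ?_, ?_, ?_, ?_⟩, ?_⟩
  · -- bottom
    ext s
    simp only [Set.mem_setOf_eq, Set.mem_empty_iff_false, iff_false]
    exact fun hs => phi_ne_none hs hbot
  · -- monotone
    exact fun a b hab s hs => phi_mono hmono s a b hab hs
  · -- continuity
    intro S hne hdir l hlub
    constructor
    · rintro τ ⟨a, haS, rfl⟩
      exact fun s hs => phi_mono hmono s a l (hlub.1 haS) hs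
    · intro τ hτ s hs
      obtain ⟨a, haS, hsa⟩ := phi_approx hA hmono hcont s S l hne hdir hlub hs
      exact hτ ⟨a, haS, rfl⟩ hsa
  · -- none case
    intro a ha
    ext s
    simp only [Set.mem_setOf_eq, Set.mem_empty_iff_false, iff_false]
    exact fun hs => phi_ne_none hs ha
  · -- inr case
    intro a x hx
    ext s
    simp only [Set.mem_setOf_eq, Set.mem_singleton_iff]
    constructor
    · intro hs
      cases s with
      | ret y =>
        have hy : δ a = some (Sum.inr y) := hs
        have : x = y := Sum.inr.inj (Option.some.inj (hx.symm.trans hy))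
        rw [this]
      | op m =>
        obtain ⟨g, hg⟩ := hs
        exact nomatch (hg.symm.trans hx)
      | cons m n u =>
        obtain ⟨g, hg, _⟩ := hs
        exact nomatch (hg.symm.trans hx)
    · rintro rfl
      exact hx
  · -- inl case
    intro a m g hδ
    ext s
    simp only [Set.mem_setOf_eq, Set.mem_union, Set.mem_singleton_iff]
    constructor
    · intro hs
      cases s with
      | ret y =>
        have hy : δ a = some (Sum.inr y) := hs
        exact nomatch (hδ.symm.trans hy)
      | op m' =>
        obtain ⟨g', hg'⟩ := hs
        have hm : m' = m := inl_inj (hg'.symm.trans hδ)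
        subst hm
        exact Or.inl rfl
      | cons m' n u =>
        obtain ⟨g', hg', hu⟩ := hs
        have hm : m' = m := inl_inj (hg'.symm.trans hδ)
        subst hm
        have hgg : g' = g := inl_eq_inl (hg'.symm.trans hδ)
        subst hgg
        exact Or.inr ⟨n, u, hu, rfl⟩
    · rintro (rfl | ⟨n, u, hu, rfl⟩)
      · exact ⟨g, hδ⟩
      · exact ⟨g, hδ, hu⟩
  · -- uniqueness
    intro ψ' ⟨h1, h2, h3, h4, h5, h6⟩
    have key : ∀ (s : Coplay E ar X) (a : A), s ∈ (ψ' a).1 ↔ phi δ s a := by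
      intro s
      induction s with
      | ret x =>
        intro a
        rcases hδ : δ a with _ | (⟨m, g⟩ | y)
        · rw [h4 a hδ]
          simp only [Set.mem_empty_iff_false, false_iff]
          exact fun hs => phi_ne_none hs hδ
        · rw [h6 a m g hδ]
          simp only [Set.mem_union, Set.mem_singleton_iff, Set.mem_setOf_eq]
          constructor
          · rintro (h | ⟨n, u, _, h⟩) <;> exact nomatch h
          · intro hs
            exact nomatch ((hs : δ a = _).symm.trans hδ)
        · rw [h5 a y hδ]
          simp only [Set.mem_singleton_iff]
          constructor
          · intro h
            cases h
            exact hδ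
          · intro hs
            have : y = x := Sum.inr.inj (Option.some.inj (hδ.symm.trans hs))
            rw [this]
      | op m' =>
        intro a
        rcases hδ : δ a with _ | (⟨m, g⟩ | y)
        · rw [h4 a hδ]
          simp only [Set.mem_empty_iff_false, false_iff]
          exact fun hs => phi_ne_none hs hδ
        · rw [h6 a m g hδ]
          simp only [Set.mem_union, Set.mem_singleton_iff, Set.mem_setOf_eq]
          constructor
          · rintro (h | ⟨n, u, _, h⟩)
            · cases h
              exact ⟨g, hδ⟩
            · exact nomatch h
          · rintro ⟨g', hg'⟩
            have hm : m' = m := inl_inj (hg'.symm.trans hδ)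
            subst hm
            exact Or.inl rfl
        · rw [h5 a y hδ]
          simp only [Set.mem_singleton_iff]
          constructor
          · intro h
            exact nomatch h
          · rintro ⟨g', hg'⟩
            exact nomatch (hg'.symm.trans hδ)
      | cons m' n u ih =>
        intro a
        rcases hδ : δ a with _ | (⟨m, g⟩ | y)
        · rw [h4 a hδ]
          simp only [Set.mem_empty_iff_false, false_iff]
          exact fun hs => phi_ne_none hs hδ
        · rw [h6 a m g hδ]
          simp only [Set.mem_union, Set.mem_singleton_iff, Set.mem_setOf_eq]
          constructor
          · rintro (h | ⟨n₀, u₀, hu₀, h⟩)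
            · exact nomatch h
            · obtain ⟨hm, hn, hu⟩ := Coplay.cons.inj h
              subst hm
              have hn' : n = n₀ := eq_of_heq hn
              subst hn'
              subst hu
              exact ⟨g, hδ, (ih (g n)).mp hu₀⟩
          · rintro ⟨g', hg', hu⟩
            have hm : m' = m := inl_inj (hg'.symm.trans hδ)
            subst hm
            have hgg : g' = g := inl_eq_inl (hg'.symm.trans hδ)
            subst hgg
            exact Or.inr ⟨n, u, (ih (g' n)).mpr hu, rfl⟩
        · rw [h5 a y hδ]
          simp only [Set.mem_singleton_iff]
          constructor
          · intro h
            exact nomatch h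
          · rintro ⟨g', hg', _⟩
            exact nomatch (hg'.symm.trans hδ)
    funext a
    apply Subtype.ext
    ext s
    exact key s a
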